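/- For every real number x > 0 and every integer y > 3, ∑_{k=3}^{y} I₋₁(2x/k) ≤ x·log y + 3·I₋₁(2x/3) − (5/2 − γ − 1/(2y))·x, where γ is the Euler–Mascheroni constant. -/

import Mathlib

open scoped BigOperators

noncomputable def besselI1 (z : ℝ) : ℝ :=
  ∑' n : ℕ, (1 / ((Nat.factorial n : ℝ) * (Nat.factorial (n + 1) : ℝ))) * (z / 2) ^ (2 * n + 1)

section
open Real Filter Topology

lemma my_self_le_sinh {t : ℝ} (ht : 0 ≤ t) : t ≤ Real.sinh t := by
  have h1 : 1 + t + t ^ 2 / 2 + t ^ 3 / 6 ≤ Real.exp t := by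
    have := Real.sum_le_exp_of_nonneg ht 4
    simp [Finset.sum_range_succ, Nat.factorial] at this
    linarith
  have hp : 0 < Real.exp t := Real.exp_pos t
  have hinv : Real.exp t * (Real.exp t)⁻¹ = 1 := mul_inv_cancel₀ (ne_of_gt hp)
  have key : 2 * t * Real.exp t + 1 ≤ (Real.exp t) ^ 2 := by
    nlinarith [sq_nonneg t, pow_nonneg ht 3, pow_nonneg ht 4, pow_nonneg ht 5, pow_nonneg ht 6,
      mul_nonneg (sub_nonneg.2 h1) (sub_nonneg.2 h1)]
  rw [Real.sinh_eq, Real.exp_neg]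
  rw [le_div_iff₀ (by norm_num : (0:ℝ) < 2)]
  nlinarith [key, hp, hinv]

lemma my_log_le {u : ℝ} (hu : 1 ≤ u) : Real.log u ≤ (u - u⁻¹) / 2 := by
  have h0 : 0 ≤ Real.log u := Real.log_nonneg hu
  have := my_self_le_sinh h0
  rwa [Real.sinh_log (by linarith : (0:ℝ) < u)] at this

lemma my_harm_le (n : ℕ) (hn : 1 ≤ n) :
    (harmonic n : ℝ) ≤ Real.log n + Real.eulerMascheroniConstant + 1 / (2 * n) := by
  set f : ℕ → ℝ := fun m => Real.eulerMascheroniSeq' (m + 1) - 1 / (2 * (m + 1)) with hf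
  have hmono : Monotone f := by
    apply monotone_nat_of_le_succ
    intro m
    have h1 : (0:ℝ) < m + 1 := by positivity
    have h2 : (0:ℝ) < m + 2 := by positivity
    simp only [hf, Real.eulerMascheroniSeq', Nat.succ_ne_zero, if_false]
    push_cast
    rw [harmonic_succ (m + 1)]
    push_cast
    have hlog : Real.log ((m:ℝ) + 2) - Real.log ((m:ℝ) + 1)
        ≤ 1 / (2 * ((m:ℝ) + 1)) + 1 / (2 * ((m:ℝ) + 2)) := by
      rw [← Real.log_div (by positivity) (by positivity)]
      have hu : (1:ℝ) ≤ ((m:ℝ) + 2) / ((m:ℝ) + 1) := by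
        rw [le_div_iff₀ h1]; linarith
      have := my_log_le hu
      have hinv : (((m:ℝ) + 2) / ((m:ℝ) + 1))⁻¹ = ((m:ℝ) + 1) / ((m:ℝ) + 2) := by
        rw [inv_div]
      rw [hinv] at this
      refine this.trans (le_of_eq ?_)
      field_simp
      ring
    have : ((m:ℝ) + 1 + 1) = (m:ℝ) + 2 := by ring
    rw [this]
    have hx : 1 / (2 * ((m:ℝ) + 2)) * 2 = ((m:ℝ) + 2)⁻¹ := by field_simp
    linarith
  have hlim : Tendsto f atTop (𝓝 Real.eulerMascheroniConstant) := by
    have h1 : Tendsto (fun m : ℕ => Real.eulerMascheroniSeq' (m + 1)) atTop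
        (𝓝 Real.eulerMascheroniConstant) :=
      Real.tendsto_eulerMascheroniSeq'.comp (tendsto_add_atTop_nat 1)
    have h2 : Tendsto (fun m : ℕ => 1 / (2 * ((m:ℝ) + 1))) atTop (𝓝 0) := by
      have := tendsto_one_div_add_atTop_nhds_zero_nat (𝕜 := ℝ)
      have h3 : Tendsto (fun m : ℕ => (1 / ((m:ℝ) + 1)) * (1/2)) atTop (𝓝 (0 * (1/2))) :=
        this.mul_const _
      simp only [zero_mul] at h3
      convert h3 using 2 with m
      field_simp
    have := h1.sub h2
    rw [sub_zero] at this
    refine this.congr (fun m => ?_)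
    simp only [hf]
  have hle : f (n - 1) ≤ Real.eulerMascheroniConstant := hmono.ge_of_tendsto hlim (n - 1)
  have hn1 : n - 1 + 1 = n := Nat.succ_pred_eq_of_pos hn
  simp only [hf, hn1] at hle
  rw [Real.eulerMascheroniSeq', if_neg (by omega)] at hle
  have : ((n - 1 : ℕ) : ℝ) + 1 = (n : ℝ) := by
    push_cast [Nat.cast_sub hn]; ring
  rw [this] at hle
  linarith

end

section
open Real


lemma my_summable (z : ℝ) (hz : 0 ≤ z) :
    Summable (fun n : ℕ =>
      (1 / ((Nat.factorial n : ℝ) * (Nat.factorial (n + 1) : ℝ))) * (z / 2) ^ (2 * n + 1)) := by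
  have h := (Real.summable_pow_div_factorial ((z / 2) ^ 2)).mul_left (z / 2)
  refine Summable.of_nonneg_of_le (fun n => by positivity) (fun n => ?_) h
  have h1 : ((z / 2) ^ 2) ^ n / (Nat.factorial n : ℝ) = (z/2)^(2*n) / (Nat.factorial n : ℝ) := by
    rw [← pow_mul]
  rw [h1]
  have h2 : (z / 2) ^ (2 * n + 1) = (z / 2) * (z / 2) ^ (2 * n) := by ring
  rw [h2]
  have hf1 : (0:ℝ) < (Nat.factorial n : ℝ) := by exact_mod_cast Nat.factorial_pos n
  have hf2 : (1:ℝ) ≤ (Nat.factorial (n+1) : ℝ) := by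
    exact_mod_cast Nat.one_le_iff_ne_zero.mpr (Nat.factorial_pos (n+1)).ne'
  have key : 1 / ((Nat.factorial n : ℝ) * (Nat.factorial (n + 1) : ℝ)) ≤ 1 / (Nat.factorial n : ℝ) := by
    apply one_div_le_one_div_of_le hf1
    nlinarith
  calc 1 / ((Nat.factorial n : ℝ) * (Nat.factorial (n + 1) : ℝ)) * (z / 2 * (z / 2) ^ (2 * n))
      ≤ 1 / (Nat.factorial n : ℝ) * (z / 2 * (z / 2) ^ (2 * n)) := by
        apply mul_le_mul_of_nonneg_right key (by positivity)
    _ = z / 2 * ((z / 2) ^ (2 * n) / (Nat.factorial n : ℝ)) := by ring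

lemma my_head (z : ℝ) (hz : 0 ≤ z) :
    besselI1 z = z / 2 + ∑' n : ℕ,
      (1 / ((Nat.factorial (n+1) : ℝ) * (Nat.factorial (n + 2) : ℝ))) * (z / 2) ^ (2 * (n+1) + 1) := by
  rw [besselI1, Summable.tsum_eq_zero_add (my_summable z hz)]
  norm_num

lemma my_lower (z : ℝ) (hz : 0 ≤ z) : z / 2 ≤ besselI1 z := by
  rw [my_head z hz]
  have : 0 ≤ ∑' n : ℕ,
      (1 / ((Nat.factorial (n+1) : ℝ) * (Nat.factorial (n + 2) : ℝ))) * (z / 2) ^ (2 * (n+1) + 1) :=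
    tsum_nonneg (fun n => by positivity)
  linarith

lemma my_key {z w : ℝ} (hz : 0 < z) (hzw : z ≤ w) :
    besselI1 z - z / 2 ≤ (z / w) ^ 3 * (besselI1 w - w / 2) := by
  have hw : 0 < w := hz.trans_le hzw
  have e1 : besselI1 z - z / 2 = ∑' n : ℕ,
      (1 / ((Nat.factorial (n+1) : ℝ) * (Nat.factorial (n + 2) : ℝ))) * (z / 2) ^ (2 * (n+1) + 1) := by
    rw [my_head z hz.le]; ring
  have e2 : besselI1 w - w / 2 = ∑' n : ℕ,
      (1 / ((Nat.factorial (n+1) : ℝ) * (Nat.factorial (n + 2) : ℝ))) * (w / 2) ^ (2 * (n+1) + 1) := by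
    rw [my_head w hw.le]; ring
  rw [e1, e2]
  have hsz : Summable (fun n : ℕ =>
      (1 / ((Nat.factorial (n+1) : ℝ) * (Nat.factorial (n + 2) : ℝ))) * (z / 2) ^ (2 * (n+1) + 1)) := by
    have := (summable_nat_add_iff (f := fun n : ℕ =>
      (1 / ((Nat.factorial n : ℝ) * (Nat.factorial (n + 1) : ℝ))) * (z / 2) ^ (2 * n + 1)) 1).2
      (my_summable z hz.le)
    exact this
  have hsw : Summable (fun n : ℕ =>
      (1 / ((Nat.factorial (n+1) : ℝ) * (Nat.factorial (n + 2) : ℝ))) * (w / 2) ^ (2 * (n+1) + 1)) := by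
    have := (summable_nat_add_iff (f := fun n : ℕ =>
      (1 / ((Nat.factorial n : ℝ) * (Nat.factorial (n + 1) : ℝ))) * (w / 2) ^ (2 * n + 1)) 1).2
      (my_summable w hw.le)
    exact this
  have hterm : ∀ n : ℕ,
      (1 / ((Nat.factorial (n+1) : ℝ) * (Nat.factorial (n + 2) : ℝ))) * (z / 2) ^ (2 * (n+1) + 1)
        ≤ (z / w) ^ 3 * ((1 / ((Nat.factorial (n+1) : ℝ) * (Nat.factorial (n + 2) : ℝ))) *
            (w / 2) ^ (2 * (n+1) + 1)) := by
    intro n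
    have hr0 : 0 ≤ z / w := by positivity
    have hr1 : z / w ≤ 1 := (div_le_one hw).2 hzw
    have hzd : z / 2 = (z / w) * (w / 2) := by field_simp
    rw [hzd, mul_pow]
    have hpow : (z / w) ^ (2 * (n+1) + 1) ≤ (z / w) ^ 3 :=
      pow_le_pow_of_le_one hr0 hr1 (by omega)
    have hc : (0:ℝ) ≤ 1 / ((Nat.factorial (n+1) : ℝ) * (Nat.factorial (n + 2) : ℝ)) := by positivity
    have hwp : (0:ℝ) ≤ (w / 2) ^ (2 * (n+1) + 1) := by positivity
    calc 1 / ((Nat.factorial (n+1) : ℝ) * (Nat.factorial (n + 2) : ℝ)) *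
          ((z / w) ^ (2 * (n+1) + 1) * (w / 2) ^ (2 * (n+1) + 1))
        ≤ 1 / ((Nat.factorial (n+1) : ℝ) * (Nat.factorial (n + 2) : ℝ)) *
          ((z / w) ^ 3 * (w / 2) ^ (2 * (n+1) + 1)) := by
          apply mul_le_mul_of_nonneg_left (mul_le_mul_of_nonneg_right hpow hwp) hc
      _ = (z / w) ^ 3 * (1 / ((Nat.factorial (n+1) : ℝ) * (Nat.factorial (n + 2) : ℝ)) *
            (w / 2) ^ (2 * (n+1) + 1)) := by ring
  calc (∑' n : ℕ, (1 / ((Nat.factorial (n+1) : ℝ) * (Nat.factorial (n + 2) : ℝ))) *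
          (z / 2) ^ (2 * (n+1) + 1))
      ≤ ∑' n : ℕ, (z / w) ^ 3 * ((1 / ((Nat.factorial (n+1) : ℝ) * (Nat.factorial (n + 2) : ℝ))) *
          (w / 2) ^ (2 * (n+1) + 1)) := Summable.tsum_le_tsum hterm hsz (hsw.mul_left _)
    _ = (z / w) ^ 3 * ∑' n : ℕ, (1 / ((Nat.factorial (n+1) : ℝ) * (Nat.factorial (n + 2) : ℝ))) *
          (w / 2) ^ (2 * (n+1) + 1) := tsum_mul_left

end


lemma my_Icc_insert (a y : ℤ) (h : a ≤ y + 1) :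
    Finset.Icc a (y + 1) = insert (y + 1) (Finset.Icc a y) := by
  ext k
  simp only [Finset.mem_Icc, Finset.mem_insert]
  omega

lemma my_notmem (y : ℤ) : y + 1 ∉ Finset.Icc (3:ℤ) y := by
  simp only [Finset.mem_Icc]
  omega

lemma my_cube_sum (y : ℤ) (hy : 3 ≤ y) :
    ∑ k ∈ Finset.Icc (3 : ℤ) y, (3 / (k : ℝ)) ^ 3 ≤ 3 - 27 / (2 * (y : ℝ) ^ 2) := by
  refine Int.le_induction (motive := fun y _ => ∑ k ∈ Finset.Icc (3 : ℤ) y, (3 / (k : ℝ)) ^ 3 ≤ 3 - 27 / (2 * (y : ℝ) ^ 2)) ?_ ?_ y hy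
  · norm_num
  · intro y hy ih
    rw [my_Icc_insert 3 y (by omega), Finset.sum_insert (my_notmem y)]
    have hyr : (3:ℝ) ≤ (y:ℝ) := by exact_mod_cast hy
    have hp1 : (0:ℝ) < (y:ℝ) := by linarith
    have hp2 : (0:ℝ) < (y:ℝ) + 1 := by linarith
    have key : (3 / ((y:ℝ) + 1)) ^ 3 ≤ 27 / (2 * (y:ℝ) ^ 2) - 27 / (2 * ((y:ℝ) + 1) ^ 2) := by
      rw [div_pow, div_sub_div _ _ (by positivity) (by positivity),
        div_le_div_iff₀ (by positivity) (by positivity)]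
      ring_nf
      nlinarith [sq_nonneg ((y:ℝ))]
    push_cast
    linarith

lemma my_harm_sum (y : ℤ) (hy : 3 ≤ y) :
    ∑ k ∈ Finset.Icc (3 : ℤ) y, (1 / (k : ℝ)) = (harmonic y.toNat : ℝ) - 3 / 2 := by
  refine Int.le_induction (motive := fun y _ => ∑ k ∈ Finset.Icc (3 : ℤ) y, (1 / (k : ℝ)) = (harmonic y.toNat : ℝ) - 3 / 2) ?_ ?_ y hy
  · show ∑ k ∈ Finset.Icc (3:ℤ) 3, (1 / (k : ℝ)) = (harmonic (Int.toNat 3) : ℝ) - 3 / 2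
    have h3 : Int.toNat 3 = 3 := rfl
    rw [Finset.Icc_self, Finset.sum_singleton, h3]
    norm_num [harmonic, Finset.sum_range_succ]
  · intro y hy ih
    rw [my_Icc_insert 3 y (by omega), Finset.sum_insert (my_notmem y)]
    have ht : (y + 1).toNat = y.toNat + 1 := by omega
    rw [ht, harmonic_succ, ih]
    have hc : ((y.toNat : ℝ)) = (y : ℝ) := by
      exact_mod_cast congrArg (Int.cast : ℤ → ℝ) (Int.toNat_of_nonneg (by omega))
    push_cast
    rw [hc]
    ring


theorem stmt16 (x : ℝ) (hx : 0 < x) (y : ℤ) (hy : 3 < y) :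
    ∑ k ∈ Finset.Icc (3 : ℤ) y, besselI1 (2 * x / (k : ℝ)) ≤
      x * Real.log (y : ℝ) + 3 * besselI1 (2 * x / 3) -
        (5 / 2 - Real.eulerMascheroniConstant - 1 / (2 * (y : ℝ))) * x := by
  have hy3 : (3:ℤ) ≤ y := by omega
  set I3 := besselI1 (2 * x / 3) with hI3
  have hD : 0 ≤ I3 - x / 3 := by
    have := my_lower (2 * x / 3) (by positivity)
    have he : (2 * x / 3) / 2 = x / 3 := by ring
    rw [he] at this
    linarith
  have hstep : ∀ k ∈ Finset.Icc (3 : ℤ) y,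
      besselI1 (2 * x / (k : ℝ)) ≤ x * (1 / (k : ℝ)) + (I3 - x / 3) * (3 / (k : ℝ)) ^ 3 := by
    intro k hk
    rw [Finset.mem_Icc] at hk
    have hk3 : (3:ℝ) ≤ (k:ℝ) := by exact_mod_cast hk.1
    have hk0 : (0:ℝ) < (k:ℝ) := by linarith
    have hz : (0:ℝ) < 2 * x / (k : ℝ) := by positivity
    have hzw : 2 * x / (k : ℝ) ≤ 2 * x / 3 := by
      apply div_le_div_of_nonneg_left (by positivity) (by norm_num) hk3
    have hkey := my_key hz hzw
    have h1 : (2 * x / (k : ℝ)) / 2 = x / (k : ℝ) := by ring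
    have h2 : (2 * x / 3) / 2 = x / 3 := by ring
    have h3 : (2 * x / (k : ℝ)) / (2 * x / 3) = 3 / (k : ℝ) := by
      field_simp
    rw [h1, h2, h3, ← hI3] at hkey
    have h4 : x * (1 / (k : ℝ)) = x / (k : ℝ) := by ring
    rw [h4]
    nlinarith [hkey]
  have hsum : ∑ k ∈ Finset.Icc (3 : ℤ) y, besselI1 (2 * x / (k : ℝ)) ≤
      x * (∑ k ∈ Finset.Icc (3 : ℤ) y, (1 / (k : ℝ))) +
        (I3 - x / 3) * (∑ k ∈ Finset.Icc (3 : ℤ) y, (3 / (k : ℝ)) ^ 3) := by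
    rw [Finset.mul_sum, Finset.mul_sum, ← Finset.sum_add_distrib]
    exact Finset.sum_le_sum hstep
  have hyr : (3:ℝ) < (y:ℝ) := by exact_mod_cast hy
  have hcast : ((y.toNat : ℝ)) = (y : ℝ) := by
    exact_mod_cast congrArg (Int.cast : ℤ → ℝ) (Int.toNat_of_nonneg (by omega))
  have hS1 : ∑ k ∈ Finset.Icc (3 : ℤ) y, (1 / (k : ℝ)) ≤
      Real.log (y : ℝ) + Real.eulerMascheroniConstant + 1 / (2 * (y : ℝ)) - 3 / 2 := by
    rw [my_harm_sum y hy3]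
    have := my_harm_le y.toNat (by omega)
    rw [hcast] at this
    linarith
  have hS2 : ∑ k ∈ Finset.Icc (3 : ℤ) y, (3 / (k : ℝ)) ^ 3 ≤ 3 := by
    have := my_cube_sum y hy3
    have hpos : 0 < 27 / (2 * (y : ℝ) ^ 2) := by positivity
    linarith
  have t1 : x * (∑ k ∈ Finset.Icc (3 : ℤ) y, (1 / (k : ℝ))) ≤
      x * (Real.log (y : ℝ) + Real.eulerMascheroniConstant + 1 / (2 * (y : ℝ)) - 3 / 2) :=
    mul_le_mul_of_nonneg_left hS1 hx.le
  have t2 : (I3 - x / 3) * (∑ k ∈ Finset.Icc (3 : ℤ) y, (3 / (k : ℝ)) ^ 3) ≤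
      (I3 - x / 3) * 3 := mul_le_mul_of_nonneg_left hS2 hD
  have hfin : x * (Real.log (y : ℝ) + Real.eulerMascheroniConstant + 1 / (2 * (y : ℝ)) - 3 / 2)
      + (I3 - x / 3) * 3 =
      x * Real.log (y : ℝ) + 3 * I3 -
        (5 / 2 - Real.eulerMascheroniConstant - 1 / (2 * (y : ℝ))) * x := by ring
  linarith
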